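/- Let V, W ⊆ X be subspaces with V ∩ W = {0}, let M be a nonzero element of the subalgebra of ⋀X generated by V, let N be a nonzero element of the subalgebra of ⋀X generated by W, and let v ∈ X. Then v⌟(M∧N) = 0 if and only if v⌟M = 0 and v⌟N = 0. -/

import Mathlib

open scoped RealInnerProductSpace

/-- The blade `v₁ ∧ ⋯ ∧ v_k` in the exterior algebra. -/
noncomputable def expBlade {X : Type*} [AddCommGroup X] [Module ℝ X] {k : ℕ}
    (v : Fin k → X) : ExteriorAlgebra ℝ X :=
  (List.ofFn fun i => ExteriorAlgebra.ι ℝ (v i)).prod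
namespace Stmt5Aux

/-- Context bundling the grade involution and the contraction with their axioms. -/
structure Ctx (X : Type*) [NormedAddCommGroup X] [InnerProductSpace ℝ X] where
  ginv : ExteriorAlgebra ℝ X →ₐ[ℝ] ExteriorAlgebra ℝ X
  hginv : ∀ v : X, ginv (ExteriorAlgebra.ι ℝ v) = - ExteriorAlgebra.ι ℝ v
  lc : X → ExteriorAlgebra ℝ X →ₗ[ℝ] ExteriorAlgebra ℝ X
  hlc_one : ∀ v : X, lc v 1 = 0
  hlc_vec : ∀ v w : X, lc v (ExteriorAlgebra.ι ℝ w) = algebraMap ℝ (ExteriorAlgebra ℝ X) ⟪v, w⟫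
  hlc_mul : ∀ (v : X) (M N : ExteriorAlgebra ℝ X),
      lc v (M * N) = lc v M * N + ginv M * lc v N

variable {X : Type*} [NormedAddCommGroup X] [InnerProductSpace ℝ X]

/-- The subalgebra generated by a subspace of vectors. -/
def adj (S : Submodule ℝ X) : Subalgebra ℝ (ExteriorAlgebra ℝ X) :=
  Algebra.adjoin ℝ (⇑(ExteriorAlgebra.ι ℝ (M := X)) '' (S : Set X))

theorem ginv_ginv (C : Ctx X) (x : ExteriorAlgebra ℝ X) : C.ginv (C.ginv x) = x := by
  have h : C.ginv.comp C.ginv = AlgHom.id ℝ (ExteriorAlgebra ℝ X) := by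
    apply ExteriorAlgebra.hom_ext
    ext v
    simp [C.hginv]
  calc C.ginv (C.ginv x) = (C.ginv.comp C.ginv) x := rfl
  _ = x := by rw [h]; rfl

theorem ginv_inj (C : Ctx X) : Function.Injective C.ginv :=
  Function.LeftInverse.injective (ginv_ginv C)

theorem lc_algebraMap (C : Ctx X) (u : X) (r : ℝ) :
    C.lc u (algebraMap ℝ (ExteriorAlgebra ℝ X) r) = 0 := by
  rw [Algebra.algebraMap_eq_smul_one, map_smul, C.hlc_one, smul_zero]

theorem mem_adjoin_ginv (C : Ctx X) (S : Submodule ℝ X) {x : ExteriorAlgebra ℝ X}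
    (hx : x ∈ adj S) : C.ginv x ∈ adj S := by
  induction hx using Algebra.adjoin_induction with
  | mem y hy =>
    obtain ⟨w, hw, rfl⟩ := hy
    rw [C.hginv]
    exact neg_mem (Algebra.subset_adjoin ⟨w, hw, rfl⟩)
  | algebraMap r => rw [AlgHom.commutes]; exact algebraMap_mem _ r
  | add a b _ _ ha hb => rw [map_add]; exact add_mem ha hb
  | mul a b _ _ ha hb => rw [map_mul]; exact mul_mem ha hb

theorem mem_adjoin_lc (C : Ctx X) (S : Submodule ℝ X) (u : X) {x : ExteriorAlgebra ℝ X}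
    (hx : x ∈ adj S) : C.lc u x ∈ adj S := by
  induction hx using Algebra.adjoin_induction with
  | mem y hy =>
    obtain ⟨w, hw, rfl⟩ := hy
    rw [C.hlc_vec]
    exact algebraMap_mem _ _
  | algebraMap r => rw [lc_algebraMap]; exact zero_mem _
  | add a b _ _ ha hb => rw [map_add]; exact add_mem ha hb
  | mul a b hma hmb ha hb =>
    rw [C.hlc_mul]
    exact add_mem (mul_mem ha hmb) (mul_mem (mem_adjoin_ginv C S hma) hb)

theorem lc_orth_zero (C : Ctx X) (S : Submodule ℝ X) {u : X} (hu : u ∈ Sᗮ)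
    {x : ExteriorAlgebra ℝ X} (hx : x ∈ adj S) : C.lc u x = 0 := by
  induction hx using Algebra.adjoin_induction with
  | mem y hy =>
    obtain ⟨w, hw, rfl⟩ := hy
    rw [C.hlc_vec, (Submodule.mem_orthogonal' S u).mp hu w hw, map_zero]
  | algebraMap r => exact lc_algebraMap C u r
  | add a b _ _ ha hb => rw [map_add, ha, hb, add_zero]
  | mul a b _ _ ha hb => rw [C.hlc_mul, ha, hb, zero_mul, mul_zero, add_zero]


/-- span of products of at most `n` vectors of `S`. -/
def Dmon (S : Submodule ℝ X) (n : ℕ) : Submodule ℝ (ExteriorAlgebra ℝ X) :=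
  Submodule.span ℝ {mm | ∃ l : List X, l.length ≤ n ∧ (∀ w ∈ l, w ∈ S) ∧
    mm = (l.map fun w => ExteriorAlgebra.ι ℝ w).prod}

theorem Dmon_mono {S : Submodule ℝ X} {n m : ℕ} (h : n ≤ m) : Dmon S n ≤ Dmon S m :=
  Submodule.span_mono (by rintro mm ⟨l, hl, hS, rfl⟩; exact ⟨l, hl.trans h, hS, rfl⟩)

theorem Dmon_zero {S : Submodule ℝ X} {x : ExteriorAlgebra ℝ X} (hx : x ∈ Dmon S 0) :
    ∃ c : ℝ, x = c • 1 := by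
  have hsub : {mm : ExteriorAlgebra ℝ X | ∃ l : List X, l.length ≤ 0 ∧ (∀ w ∈ l, w ∈ S) ∧
      mm = (l.map fun w => ExteriorAlgebra.ι ℝ w).prod} ⊆ {(1 : ExteriorAlgebra ℝ X)} := by
    rintro mm ⟨l, hl, -, rfl⟩
    have : l = [] := List.length_eq_zero_iff.mp (Nat.le_zero.mp hl)
    simp [this]
  have h2 := Submodule.span_mono hsub hx
  rw [Submodule.mem_span_singleton] at h2
  obtain ⟨c, hc⟩ := h2
  exact ⟨c, hc.symm⟩

theorem iota_mul_Dmon {S : Submodule ℝ X} {n : ℕ} {w : X} (hw : w ∈ S)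
    {y : ExteriorAlgebra ℝ X} (hy : y ∈ Dmon S n) :
    ExteriorAlgebra.ι ℝ w * y ∈ Dmon S (n + 1) := by
  induction hy using Submodule.span_induction with
  | mem mm hmm =>
    obtain ⟨l, hln, hlS, rfl⟩ := hmm
    refine Submodule.subset_span ⟨w :: l, by simpa using hln, ?_, by simp⟩
    intro x hx
    rcases List.mem_cons.mp hx with h | h
    · exact h ▸ hw
    · exact hlS x h
  | zero => rw [mul_zero]; exact zero_mem _
  | add a b _ _ hpa hpb => rw [mul_add]; exact add_mem hpa hpb
  | smul r a _ hpa => rw [mul_smul_comm]; exact Submodule.smul_mem _ r hpa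


theorem lc_prod_mem (C : Ctx X) {S : Submodule ℝ X} (v : X) (l : List X) :
    (∀ w ∈ l, w ∈ S) → ∀ n : ℕ, l.length ≤ n + 1 →
    C.lc v ((l.map fun w => ExteriorAlgebra.ι ℝ w).prod) ∈ Dmon S n := by
  induction l with
  | nil =>
    intro _ n _
    simp only [List.map_nil, List.prod_nil, C.hlc_one]
    exact zero_mem _
  | cons w l ih =>
    intro hS n hlen
    have hwS : w ∈ S := hS w List.mem_cons_self
    have hlS : ∀ x ∈ l, x ∈ S := fun x hx => hS x (List.mem_cons_of_mem _ hx)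
    simp only [List.map_cons, List.prod_cons]
    rw [C.hlc_mul, C.hlc_vec, C.hginv]
    apply add_mem
    · rw [← Algebra.smul_def]
      apply Submodule.smul_mem
      refine Submodule.subset_span ⟨l, ?_, hlS, rfl⟩
      simpa using Nat.lt_succ_iff.mp (Nat.lt_of_lt_of_le (by simp) hlen)
    · cases n with
      | zero =>
        have : l = [] := List.length_eq_zero_iff.mp (by
          have := hlen; simp only [List.length_cons] at this; omega)
        subst this
        simp only [List.map_nil, List.prod_nil, C.hlc_one, mul_zero]
        exact zero_mem _
      | succ nn =>
        have hl2 : C.lc v ((l.map fun w => ExteriorAlgebra.ι ℝ w).prod) ∈ Dmon S nn := by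
          apply ih hlS
          simp only [List.length_cons] at hlen; omega
        rw [neg_mul]
        exact neg_mem (iota_mul_Dmon hwS hl2)

theorem lc_Dmon (C : Ctx X) {S : Submodule ℝ X} (v : X) {n : ℕ} {x : ExteriorAlgebra ℝ X}
    (hx : x ∈ Dmon S (n + 1)) : C.lc v x ∈ Dmon S n := by
  induction hx using Submodule.span_induction with
  | mem mm hmm =>
    obtain ⟨l, hln, hlS, rfl⟩ := hmm
    exact lc_prod_mem C v l hlS n hln
  | zero => rw [map_zero]; exact zero_mem _
  | add a b _ _ hpa hpb => rw [map_add]; exact add_mem hpa hpb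
  | smul r a _ hpa => rw [map_smul]; exact Submodule.smul_mem _ r hpa

theorem Dmon_le_adjoin {S : Submodule ℝ X} {n : ℕ} {x : ExteriorAlgebra ℝ X}
    (hx : x ∈ Dmon S n) : x ∈ adj S := by
  induction hx using Submodule.span_induction with
  | mem mm hmm =>
    obtain ⟨l, -, hlS, rfl⟩ := hmm
    apply list_prod_mem
    intro y hy
    obtain ⟨w, hw, rfl⟩ := List.mem_map.mp hy
    exact Algebra.subset_adjoin ⟨w, hlS w hw, rfl⟩
  | zero => exact zero_mem _
  | add a b _ _ hpa hpb => exact add_mem hpa hpb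
  | smul r a _ hpa => exact Subalgebra.smul_mem _ hpa r

theorem prod_mem_Dmon {S : Submodule ℝ X} (l : List (ExteriorAlgebra ℝ X)) :
    (∀ y ∈ l, y ∈ ⇑(ExteriorAlgebra.ι ℝ (M := X)) '' (S : Set X)) →
    l.prod ∈ Dmon S l.length := by
  induction l with
  | nil => exact fun _ => Submodule.subset_span ⟨[], by simp, by simp, by simp⟩
  | cons a l ihl =>
    intro hls
    obtain ⟨w, hw, rfl⟩ := hls a List.mem_cons_self
    have hl2 := ihl (fun y hy => hls y (List.mem_cons_of_mem _ hy))
    simpa using iota_mul_Dmon hw hl2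

theorem mem_Dmon_of_adjoin {S : Submodule ℝ X} {x : ExteriorAlgebra ℝ X}
    (hx : x ∈ adj S) : ∃ n, x ∈ Dmon S n := by
  rw [adj, ← Subalgebra.mem_toSubmodule, Algebra.adjoin_eq_span] at hx
  induction hx using Submodule.span_induction with
  | mem mm hmm =>
    obtain ⟨l, hls, rfl⟩ := Submonoid.exists_list_of_mem_closure hmm
    exact ⟨l.length, prod_mem_Dmon l hls⟩
  | zero => exact ⟨0, zero_mem _⟩
  | add a b _ _ hpa hpb =>
    obtain ⟨n1, h1⟩ := hpa
    obtain ⟨n2, h2⟩ := hpb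
    exact ⟨max n1 n2, add_mem (Dmon_mono (le_max_left _ _) h1) (Dmon_mono (le_max_right _ _) h2)⟩
  | smul r a _ hpa =>
    obtain ⟨n1, h1⟩ := hpa
    exact ⟨n1, Submodule.smul_mem _ r h1⟩

theorem exists_dual [FiniteDimensional ℝ X] (V W : Submodule ℝ X) (hVW : V ⊓ W = ⊥) :
    ∃ (m : ℕ) (fX : Fin m → X) (u : Fin m → X),
      (∀ i, fX i ∈ W) ∧ (∀ i, u i ∈ Vᗮ) ∧
      (∀ w ∈ W, ∑ i, ⟪u i, w⟫ • fX i = w) := by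
  classical
  set m := Module.finrank ℝ W with hm
  let f : Module.Basis (Fin m) ℝ W := Module.finBasis ℝ W
  let Ψ : X →ₗ[ℝ] Module.Dual ℝ W :=
    { toFun := fun x => (innerₗ X x).comp W.subtype
      map_add' := fun x y => by simp only [map_add, LinearMap.add_comp]
      map_smul' := fun c x => by simp only [map_smul, LinearMap.smul_comp]; rfl }
  let Φ : ↥Vᗮ →ₗ[ℝ] Module.Dual ℝ W := Ψ.comp Vᗮ.subtype
  have hΦ : ∀ (a : ↥Vᗮ) (b : W), Φ a b = ⟪(a : X), (b : X)⟫ := fun a b => rfl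
  have hker : LinearMap.ker Φ = (Vᗮ ⊓ Wᗮ).comap Vᗮ.subtype := by
    ext a
    simp only [LinearMap.mem_ker, Submodule.mem_comap, Submodule.mem_inf, Submodule.coe_subtype]
    constructor
    · intro h
      refine ⟨a.2, ?_⟩
      rw [Submodule.mem_orthogonal']
      intro y hy
      have := congrArg (fun g => g ⟨y, hy⟩) h
      simpa [hΦ] using this
    · rintro ⟨-, h⟩
      ext b
      simpa [hΦ] using (Submodule.mem_orthogonal' _ _).mp h b b.2
  have hrange : LinearMap.range Φ = ⊤ := by
    apply Submodule.eq_top_of_finrank_eq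
    have h1 := LinearMap.finrank_range_add_finrank_ker Φ
    have h2 : Module.finrank ℝ (LinearMap.ker Φ) = Module.finrank ℝ ↥((V ⊔ W)ᗮ) := by
      rw [hker, ← Submodule.inf_orthogonal]
      exact LinearEquiv.finrank_eq (Submodule.comapSubtypeEquivOfLe inf_le_left)
    have h3 := Submodule.finrank_add_finrank_orthogonal (K := V)
    have h4 := Submodule.finrank_add_finrank_orthogonal (K := V ⊔ W)
    have h5 := Submodule.finrank_sup_add_finrank_inf_eq V W
    rw [hVW] at h5
    simp only [finrank_bot, add_zero] at h5
    have h6 : Module.finrank ℝ (Module.Dual ℝ ↥W) = m := Subspace.dual_finrank_eq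
    omega
  have hsurj : ∀ φ : Module.Dual ℝ W, ∃ a : ↥Vᗮ, Φ a = φ := by
    intro φ
    exact (LinearMap.range_eq_top.mp hrange) φ |>.imp fun a h => h
  choose uu huu using hsurj
  refine ⟨m, fun i => ((f i : W) : X), fun i => (uu (f.coord i) : X), fun i => (f i).2,
    fun i => (uu (f.coord i)).2, ?_⟩
  intro w hw
  have key : ∀ i, ⟪((uu (f.coord i) : X)), w⟫ = f.repr ⟨w, hw⟩ i := by
    intro i
    have := congrArg (fun g => g ⟨w, hw⟩) (huu (f.coord i))
    simpa [hΦ, Module.Basis.coord_apply] using this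
  calc ∑ i, ⟪((uu (f.coord i) : X)), w⟫ • ((f i : W) : X)
      = ∑ i, ((f.repr ⟨w, hw⟩ i • f i : W) : X) := by
        refine Finset.sum_congr rfl fun i _ => ?_
        rw [key i]; rfl
    _ = ((∑ i, f.repr ⟨w, hw⟩ i • f i : W) : X) := by
        rw [← Submodule.coe_sum]
    _ = w := by rw [Module.Basis.sum_repr]


/-- iterated products `(E - 1)(E - 2)⋯(E - j)`. -/
noncomputable def Qop (E : ExteriorAlgebra ℝ X →ₗ[ℝ] ExteriorAlgebra ℝ X) :
    ℕ → ExteriorAlgebra ℝ X →ₗ[ℝ] ExteriorAlgebra ℝ X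
  | 0 => LinearMap.id
  | (j+1) => (E - (((j : ℝ) + 1) • LinearMap.id)) ∘ₗ Qop E j

theorem Qop_eigen (E : ExteriorAlgebra ℝ X →ₗ[ℝ] ExteriorAlgebra ℝ X)
    {y : ExteriorAlgebra ℝ X} {r : ℝ} (hy : E y = r • y) (j : ℕ) :
    Qop E j y = (∏ kk ∈ Finset.range j, (r - ((kk : ℝ) + 1))) • y := by
  induction j with
  | zero => simp [Qop]
  | succ j ih =>
    rw [Qop, LinearMap.comp_apply, ih, map_smul, LinearMap.sub_apply, hy,
      LinearMap.smul_apply, LinearMap.id_apply, Finset.prod_range_succ, ← sub_smul, smul_smul,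
      mul_comm]

set_option maxHeartbeats 1000000 in
theorem vanish_scalar [FiniteDimensional ℝ X] (C : Ctx X) (V W : Submodule ℝ X)
    (hVW : V ⊓ W = ⊥) {x : ExteriorAlgebra ℝ X} (hx : x ∈ adj W)
    (h : ∀ u ∈ Vᗮ, C.lc u x = 0) : ∃ c : ℝ, x = c • 1 := by
  classical
  obtain ⟨m, fX, u, hfW, huV, hdual⟩ := exists_dual V W hVW
  set E : ExteriorAlgebra ℝ X →ₗ[ℝ] ExteriorAlgebra ℝ X :=
    ∑ i, (LinearMap.mulLeft ℝ (ExteriorAlgebra.ι ℝ (fX i))) ∘ₗ C.lc (u i) with hE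
  have hEapp : ∀ y, E y = ∑ i, ExteriorAlgebra.ι ℝ (fX i) * C.lc (u i) y := by
    intro y
    rw [hE, LinearMap.sum_apply]
    rfl
  have hEx : E x = 0 := by
    rw [hEapp]
    apply Finset.sum_eq_zero
    intro i _
    rw [h (u i) (huV i), mul_zero]
  have hstep : ∀ w ∈ W, ∀ y : ExteriorAlgebra ℝ X,
      E (ExteriorAlgebra.ι ℝ w * y) = ExteriorAlgebra.ι ℝ w * (y + E y) := by
    intro w hw y
    rw [hEapp, hEapp]
    have hterm : ∀ i, ExteriorAlgebra.ι ℝ (fX i) * C.lc (u i) (ExteriorAlgebra.ι ℝ w * y)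
        = ⟪u i, w⟫ • (ExteriorAlgebra.ι ℝ (fX i) * y)
          + ExteriorAlgebra.ι ℝ w * (ExteriorAlgebra.ι ℝ (fX i) * C.lc (u i) y) := by
      intro i
      rw [C.hlc_mul, C.hlc_vec, C.hginv, mul_add]
      congr 1
      · rw [← mul_assoc, ← Algebra.commutes, mul_assoc, ← Algebra.smul_def]
      · rw [neg_mul, mul_neg, ← mul_assoc]
        have swap : ExteriorAlgebra.ι ℝ (fX i) * ExteriorAlgebra.ι ℝ w
            = -(ExteriorAlgebra.ι ℝ w * ExteriorAlgebra.ι ℝ (fX i)) :=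
          eq_neg_of_add_eq_zero_left (ExteriorAlgebra.ι_add_mul_swap (fX i) w)
        rw [swap, neg_mul, neg_neg, mul_assoc]
    rw [Finset.sum_congr rfl (fun i _ => hterm i), Finset.sum_add_distrib, mul_add]
    congr 1
    · have h1 : ∀ i : Fin m, ⟪u i, w⟫ • (ExteriorAlgebra.ι ℝ (fX i) * y)
          = (⟪u i, w⟫ • ExteriorAlgebra.ι ℝ (fX i)) * y := fun i => (smul_mul_assoc _ _ _).symm
      rw [Finset.sum_congr rfl (fun i _ => h1 i), ← Finset.sum_mul]
      congr 1
      conv_rhs => rw [← hdual w hw, map_sum]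
      exact Finset.sum_congr rfl fun i _ => (map_smul (ExteriorAlgebra.ι ℝ) _ _).symm
    · rw [Finset.mul_sum]
  -- eigen decomposition of monomials
  have hmono : ∀ mm ∈ Submonoid.closure (⇑(ExteriorAlgebra.ι ℝ (M := X)) '' (W : Set X)),
      ∃ k : ℕ, E mm = (k : ℝ) • mm ∧ (k = 0 → mm = 1) := by
    intro mm hmm
    induction hmm using Submonoid.closure_induction_left with
    | one =>
      refine ⟨0, ?_, fun _ => rfl⟩
      rw [hEapp]
      simp [C.hlc_one]
    | mul_left a ha y hy ih =>
      obtain ⟨w, hw, rfl⟩ := ha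
      obtain ⟨k, hk, -⟩ := ih
      refine ⟨k + 1, ?_, by simp⟩
      rw [hstep w hw y, hk, mul_add, mul_smul_comm]
      push_cast
      rw [add_smul, one_smul]
      abel
  have hxspan : x ∈ Submodule.span ℝ
      ((Submonoid.closure (⇑(ExteriorAlgebra.ι ℝ (M := X)) '' (W : Set X)) : Submonoid _) :
        Set (ExteriorAlgebra ℝ X)) := by
    have hx' := hx
    rw [adj, ← Subalgebra.mem_toSubmodule, Algebra.adjoin_eq_span] at hx'
    exact hx'
  obtain ⟨n, c, g, hgx⟩ := Submodule.mem_span_set'.mp hxspan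
  choose k hk hk0 using fun i : Fin n => hmono (g i) (g i).2
  set L := Finset.univ.sup k with hL
  set α := ∏ kk ∈ Finset.range L, ((0 : ℝ) - ((kk : ℝ) + 1)) with hα
  have hα0 : α ≠ 0 := by
    rw [hα]
    apply Finset.prod_ne_zero_iff.mpr
    intro kk _
    have : (0 : ℝ) < (kk : ℝ) + 1 := by positivity
    intro hcon
    nlinarith
  have hQx : Qop E L x = α • x := by
    rw [Qop_eigen E (by rw [hEx, zero_smul]) L]
  have hQg : ∀ i : Fin n, Qop E L ((g i : ExteriorAlgebra ℝ X)) =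
      (if k i = 0 then α • (1 : ExteriorAlgebra ℝ X) else 0) := by
    intro i
    rw [Qop_eigen E (hk i) L]
    by_cases h0 : k i = 0
    · rw [if_pos h0, hk0 i h0, h0]
      congr 1
      rw [hα]
      exact Finset.prod_congr rfl fun kk _ => by norm_num
    · rw [if_neg h0]
      have hkL : k i ≤ L := Finset.le_sup (Finset.mem_univ i)
      have h1 : 1 ≤ k i := Nat.one_le_iff_ne_zero.mpr h0
      have hmem : k i - 1 ∈ Finset.range L := Finset.mem_range.mpr (by omega)
      have hzero : ((k i : ℝ)) - (((k i - 1 : ℕ) : ℝ) + 1) = 0 := by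
        push_cast [Nat.cast_sub h1]
        ring
      rw [Finset.prod_eq_zero hmem hzero, zero_smul]
  have hfinal : α • x = α • ((∑ i, if k i = 0 then c i else 0) • (1 : ExteriorAlgebra ℝ X)) := by
    rw [← hQx, ← hgx, map_sum, Finset.sum_smul, Finset.smul_sum]
    refine Finset.sum_congr rfl fun i _ => ?_
    rw [map_smul, hQg i]
    by_cases h0 : k i = 0 <;> simp [h0, smul_smul, mul_comm]
  exact ⟨_, smul_right_injective _ hα0 hfinal⟩


/-- iterated contraction -/
def cfold (C : Ctx X) : List X → ExteriorAlgebra ℝ X → ExteriorAlgebra ℝ X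
  | [], x => x
  | w :: l, x => cfold C l (C.lc w x)

theorem cfold_zero (C : Ctx X) (l : List X) : cfold C l 0 = 0 := by
  induction l with
  | nil => rfl
  | cons w l ih =>
    show cfold C l (C.lc w 0) = 0
    rw [map_zero]; exact ih

theorem cfold_add (C : Ctx X) (l : List X) (x y : ExteriorAlgebra ℝ X) :
    cfold C l (x + y) = cfold C l x + cfold C l y := by
  induction l generalizing x y with
  | nil => rfl
  | cons w l ih =>
    show cfold C l (C.lc w (x + y)) = _
    rw [map_add]; exact ih _ _

theorem cfold_mem_adjoin (C : Ctx X) (S : Submodule ℝ X) (l : List X) {x : ExteriorAlgebra ℝ X}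
    (hx : x ∈ adj S) : cfold C l x ∈ adj S := by
  induction l generalizing x with
  | nil => exact hx
  | cons w l ih => exact ih (mem_adjoin_lc C S w hx)

theorem cfold_mul_left (C : Ctx X) (V : Submodule ℝ X) (l : List X) (hl : ∀ w ∈ l, w ∈ Vᗮ)
    {a : ExteriorAlgebra ℝ X} (ha : a ∈ adj V) (y : ExteriorAlgebra ℝ X) :
    cfold C l (a * y) = (⇑C.ginv)^[l.length] a * cfold C l y := by
  induction l generalizing a y with
  | nil => rfl
  | cons w l ih =>
    show cfold C l (C.lc w (a * y)) = _
    rw [C.hlc_mul, lc_orth_zero C V (hl w List.mem_cons_self) ha, zero_mul, zero_add,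
      ih (fun x hx => hl x (List.mem_cons_of_mem _ hx)) (mem_adjoin_ginv C V ha) (C.lc w y),
      List.length_cons, Function.iterate_succ_apply]
    rfl

theorem cfold_mul_right (C : Ctx X) (W : Submodule ℝ X) (l : List X) (hl : ∀ w ∈ l, w ∈ Wᗮ)
    {y : ExteriorAlgebra ℝ X} (hy : y ∈ adj W) (x : ExteriorAlgebra ℝ X) :
    cfold C l (x * y) = cfold C l x * y := by
  induction l generalizing x with
  | nil => rfl
  | cons w l ih =>
    show cfold C l (C.lc w (x * y)) = _
    rw [C.hlc_mul, lc_orth_zero C W (hl w List.mem_cons_self) hy, mul_zero, add_zero]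
    exact ih (fun z hz => hl z (List.mem_cons_of_mem _ hz)) (C.lc w x)

theorem exists_contract [FiniteDimensional ℝ X] (C : Ctx X) (V W : Submodule ℝ X)
    (hVW : V ⊓ W = ⊥) {x : ExteriorAlgebra ℝ X} (hx : x ∈ adj W) (hx0 : x ≠ 0) :
    ∃ l : List X, (∀ w ∈ l, w ∈ Vᗮ) ∧ ∃ c : ℝ, c ≠ 0 ∧ cfold C l x = c • 1 := by
  obtain ⟨n, hxn⟩ := mem_Dmon_of_adjoin hx
  clear hx
  induction n generalizing x with
  | zero =>
    obtain ⟨c, rfl⟩ := Dmon_zero hxn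
    exact ⟨[], by simp, c, fun h => hx0 (by rw [h, zero_smul]), rfl⟩
  | succ n ih =>
    by_cases hvan : ∀ u ∈ Vᗮ, C.lc u x = 0
    · obtain ⟨c, rfl⟩ := vanish_scalar C V W hVW (Dmon_le_adjoin hxn) hvan
      exact ⟨[], by simp, c, fun h => hx0 (by rw [h, zero_smul]), rfl⟩
    · push_neg at hvan
      obtain ⟨u, hu, hu0⟩ := hvan
      obtain ⟨l, hl, c, hc, hfold⟩ := ih hu0 (lc_Dmon C u hxn)
      refine ⟨u :: l, ?_, c, hc, hfold⟩
      intro w hw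
      rcases List.mem_cons.mp hw with h | h
      · exact h ▸ hu
      · exact hl w h

theorem cancel_right [FiniteDimensional ℝ X] (C : Ctx X) (V W : Submodule ℝ X)
    (hVW : V ⊓ W = ⊥) {a y : ExteriorAlgebra ℝ X} (ha : a ∈ adj V) (hy : y ∈ adj W)
    (hy0 : y ≠ 0) (h : a * y = 0) : a = 0 := by
  obtain ⟨l, hl, c, hc, hfold⟩ := exists_contract C V W hVW hy hy0
  have h2 : cfold C l (a * y) = 0 := by rw [h, cfold_zero]
  rw [cfold_mul_left C V l hl ha y, hfold, mul_smul_comm, mul_one] at h2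
  have h3 : (⇑C.ginv)^[l.length] a = 0 := by
    rcases smul_eq_zero.mp h2 with h | h
    · exact absurd h hc
    · exact h
  have h4 : (⇑C.ginv)^[l.length] (0 : ExteriorAlgebra ℝ X) = 0 :=
    Function.iterate_fixed (map_zero C.ginv) l.length
  exact Function.Injective.iterate (ginv_inj C) l.length (h3.trans h4.symm)

theorem lc_eigen (C : Ctx X) (W : Submodule ℝ X) {v : X} {r : ℝ} {x : ExteriorAlgebra ℝ X}
    (hx : x ∈ adj W) (h : C.lc v x = r • x) (hr : r ≠ 0) : x = 0 := by
  obtain ⟨n, hxn⟩ := mem_Dmon_of_adjoin hx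
  clear hx
  induction n generalizing x with
  | zero =>
    obtain ⟨c, rfl⟩ := Dmon_zero hxn
    have h0 : C.lc v ((c : ℝ) • (1 : ExteriorAlgebra ℝ X)) = 0 := by
      rw [map_smul, C.hlc_one, smul_zero]
    rw [h0] at h
    exact (smul_eq_zero.mp h.symm).resolve_left hr
  | succ n ih =>
    have h2 : C.lc v (C.lc v x) = r • C.lc v x := by
      conv_lhs => rw [h]
      rw [map_smul]
    have h3 := ih h2 (lc_Dmon C v hxn)
    have h4 : r • x = 0 := by rw [← h, h3]
    exact (smul_eq_zero.mp h4).resolve_left hr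

end Stmt5Aux

/-- for disjoint subspaces `V, W` and nonzero `M ∈ ⋀V`, `N ∈ ⋀W`,
`v⌟(M∧N) = 0 ↔ v⌟M = 0 ∧ v⌟N = 0`. -/
theorem stmt5 {X : Type*} [NormedAddCommGroup X] [InnerProductSpace ℝ X] [FiniteDimensional ℝ X]
    -- the grade involution: the unique algebra automorphism with `v̂ = -v` on vectors
    (ginv : ExteriorAlgebra ℝ X →ₐ[ℝ] ExteriorAlgebra ℝ X)
    (hginv : ∀ v : X, ginv (ExteriorAlgebra.ι ℝ v) = - ExteriorAlgebra.ι ℝ v)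
    -- the left contraction by a vector, characterized by its defining properties
    (lc : X → ExteriorAlgebra ℝ X →ₗ[ℝ] ExteriorAlgebra ℝ X)
    (hlc_one : ∀ v : X, lc v 1 = 0)
    (hlc_vec : ∀ v w : X, lc v (ExteriorAlgebra.ι ℝ w) = algebraMap ℝ (ExteriorAlgebra ℝ X) ⟪v, w⟫)
    (hlc_mul : ∀ (v : X) (M N : ExteriorAlgebra ℝ X),
      lc v (M * N) = lc v M * N + ginv M * lc v N)
    (V W : Submodule ℝ X) (hVW : V ⊓ W = ⊥)
    (M N : ExteriorAlgebra ℝ X)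
    (hM : M ∈ Algebra.adjoin ℝ (⇑(ExteriorAlgebra.ι ℝ (M := X)) '' (V : Set X)))
    (hN : N ∈ Algebra.adjoin ℝ (⇑(ExteriorAlgebra.ι ℝ (M := X)) '' (W : Set X)))
    (hM0 : M ≠ 0) (hN0 : N ≠ 0) (v : X) :
    lc v (M * N) = 0 ↔ lc v M = 0 ∧ lc v N = 0 := by
  classical
  let C : Stmt5Aux.Ctx X := ⟨ginv, hginv, lc, hlc_one, hlc_vec, hlc_mul⟩
  have hM' : M ∈ Stmt5Aux.adj V := hM
  have hN' : N ∈ Stmt5Aux.adj W := hN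
  show C.lc v (M * N) = 0 ↔ C.lc v M = 0 ∧ C.lc v N = 0
  constructor
  · intro h
    have hWV : W ⊓ V = ⊥ := by rwa [inf_comm] at hVW
    have haN : C.lc v M * N + C.ginv M * C.lc v N = 0 := by rw [← C.hlc_mul]; exact h
    have hMg : C.ginv M ∈ Stmt5Aux.adj V := Stmt5Aux.mem_adjoin_ginv C V hM'
    have hMg0 : C.ginv M ≠ 0 := fun hh => hM0 (Stmt5Aux.ginv_inj C (by rw [hh, map_zero]))
    obtain ⟨l, hl, c₀, hc₀, hfold⟩ := Stmt5Aux.exists_contract C W V hWV hMg hMg0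
    have hbW : C.lc v N ∈ Stmt5Aux.adj W := Stmt5Aux.mem_adjoin_lc C W v hN'
    have h2 : Stmt5Aux.cfold C l (C.lc v M * N) + Stmt5Aux.cfold C l (C.ginv M * C.lc v N)
        = 0 := by rw [← Stmt5Aux.cfold_add, haN, Stmt5Aux.cfold_zero]
    rw [Stmt5Aux.cfold_mul_right C W l hl hN' (C.lc v M),
        Stmt5Aux.cfold_mul_right C W l hl hbW (C.ginv M), hfold, smul_mul_assoc, one_mul] at h2
    set a' := Stmt5Aux.cfold C l (C.lc v M) with ha'
    have h5 : c₀ • C.lc v N = -(a' * N) := eq_neg_of_add_eq_zero_right h2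
    have hb : C.lc v N = ((-c₀⁻¹) • a') * N := by
      rw [smul_mul_assoc]
      calc C.lc v N = c₀⁻¹ • (c₀ • C.lc v N) := by
            rw [smul_smul, inv_mul_cancel₀ hc₀, one_smul]
        _ = c₀⁻¹ • (-(a' * N)) := by rw [h5]
        _ = (-c₀⁻¹) • (a' * N) := by rw [smul_neg, neg_smul]
    have hc'V : ((-c₀⁻¹) • a') ∈ Stmt5Aux.adj V :=
      Subalgebra.smul_mem _ (Stmt5Aux.cfold_mem_adjoin C V l
        (Stmt5Aux.mem_adjoin_lc C V v hM')) _
    have hvan : ∀ u ∈ Wᗮ, C.lc u ((-c₀⁻¹) • a') = 0 := by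
      intro u hu
      have h6 : C.lc u (((-c₀⁻¹) • a') * N) = 0 := by
        rw [← hb]
        exact Stmt5Aux.lc_orth_zero C W hu hbW
      rw [C.hlc_mul u _ N, Stmt5Aux.lc_orth_zero C W hu hN', mul_zero, add_zero] at h6
      exact Stmt5Aux.cancel_right C V W hVW (Stmt5Aux.mem_adjoin_lc C V u hc'V) hN' hN0 h6
    obtain ⟨lam, hlam⟩ := Stmt5Aux.vanish_scalar C W V hWV hc'V hvan
    have hbN : C.lc v N = lam • N := by rw [hb, hlam, smul_mul_assoc, one_mul]
    have hlam0 : lam = 0 := by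
      by_contra hne
      exact hN0 (Stmt5Aux.lc_eigen C W hN' hbN hne)
    have hbz : C.lc v N = 0 := by rw [hbN, hlam0, zero_smul]
    have haz : C.lc v M * N = 0 := by rw [hbz, mul_zero, add_zero] at haN; exact haN
    exact ⟨Stmt5Aux.cancel_right C V W hVW (Stmt5Aux.mem_adjoin_lc C V v hM') hN' hN0 haz, hbz⟩
  · rintro ⟨h1, h2⟩
    rw [C.hlc_mul, h1, h2, zero_mul, mul_zero, add_zero]
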